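/- If q0 ≠ 0 and q1 ≠ 0 and a ≠ b are positive reals, then the restriction of F_q(x,y) = ((x-q0)² + (y-q1)², ax² + by²) to its singular set S(F_q) = {(x,y) : det JF_q(x,y) = 0} is injective. -/
import Mathlib


/-- For `a ≠ b` positive and `q0, q1 ≠ 0`, the restriction of
`F_q(x,y) = ((x-q0)² + (y-q1)², ax² + by²)` to its singular set
`{(x,y) : 4((x-q0)by - (y-q1)ax) = 0}` is injective. -/
theorem Fq_injective_on_singular_set
    (a b q0 q1 : ℝ) (ha : 0 < a) (hb : 0 < b) (hab : a ≠ b)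
    (hq0 : q0 ≠ 0) (hq1 : q1 ≠ 0) :
    Set.InjOn
      (fun p : ℝ × ℝ =>
        (((p.1 - q0) ^ 2 + (p.2 - q1) ^ 2, a * p.1 ^ 2 + b * p.2 ^ 2) : ℝ × ℝ))
      {p : ℝ × ℝ | 4 * ((p.1 - q0) * (b * p.2) - (p.2 - q1) * (a * p.1)) = 0} := by
  rintro ⟨x1, y1⟩ hp ⟨x2, y2⟩ hp' h
  simp only [Set.mem_setOf_eq] at hp hp'
  simp only [Prod.mk.injEq] at h
  obtain ⟨he1, he2⟩ := h
  have hXs : (b - a) * ((x1 + x2) * (x1 - x2))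
      - 2 * b * (q0 * (x1 - x2) + q1 * (y1 - y2)) = 0 := by
    linear_combination b * he1 - he2
  have hYt : (a - b) * ((y1 + y2) * (y1 - y2))
      - 2 * a * (q0 * (x1 - x2) + q1 * (y1 - y2)) = 0 := by
    linear_combination a * he1 - he2
  have hP : (b - a) * ((x1 + x2) * (y1 + y2) + (x1 - x2) * (y1 - y2))
      + 2 * a * q1 * (x1 + x2) - 2 * b * q0 * (y1 + y2) = 0 := by
    linear_combination hp / 2 + hp' / 2
  have hprod : ((b - a) * ((x1 + x2) * (x1 - x2))
      - 2 * b * (q0 * (x1 - x2) + q1 * (y1 - y2)))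
      * ((a - b) * ((y1 + y2) * (y1 - y2))
      - 2 * a * (q0 * (x1 - x2) + q1 * (y1 - y2))) = 0 :=
    mul_eq_zero_of_left hXs _
  have key : (b - a) ^ 3 * ((x1 - x2) * (y1 - y2)) ^ 2 = 0 := by
    linear_combination ((a - b) ^ 2 * (x1 - x2) * (y1 - y2)) * hP
      + (b - a) * hprod
      + (2 * a * (b - a) * q0 * (x1 - x2)) * hXs
      + (2 * b * (b - a) * q1 * (y1 - y2)) * hYt
  have hba : (b - a) ≠ 0 := sub_ne_zero.mpr (Ne.symm hab)
  have hsq : ((x1 - x2) * (y1 - y2)) ^ 2 = 0 := by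
    rcases mul_eq_zero.mp key with h | h
    · exact absurd h (pow_ne_zero _ hba)
    · exact h
  have hst : (x1 - x2) * (y1 - y2) = 0 := by
    exact pow_eq_zero_iff (two_ne_zero) |>.mp hsq
  rcases mul_eq_zero.mp hst with hs | ht
  · -- x1 = x2; deduce y1 = y2
    have hx : x1 = x2 := sub_eq_zero.mp hs
    have hy' : (2 * b * q1) * (y1 - y2) = 0 := by
      linear_combination (-1 : ℝ) * hXs + ((b - a) * (x1 + x2) - 2 * b * q0) * hs
    have hy : y1 = y2 := by
      have h2bq1 : (2 * b * q1) ≠ 0 := mul_ne_zero (by positivity) hq1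
      have := (mul_eq_zero.mp hy').resolve_left h2bq1
      exact sub_eq_zero.mp this
    exact Prod.ext hx hy
  · have hy : y1 = y2 := sub_eq_zero.mp ht
    have hx' : (2 * a * q0) * (x1 - x2) = 0 := by
      linear_combination (-1 : ℝ) * hYt + ((a - b) * (y1 + y2) - 2 * a * q1) * ht
    have hx : x1 = x2 := by
      have h2aq0 : (2 * a * q0) ≠ 0 := by
        exact mul_ne_zero (by positivity) hq0
      have := (mul_eq_zero.mp hx').resolve_left h2aq0
      exact sub_eq_zero.mp this
    exact Prod.ext hx hy
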